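/- If X is a compact space and κ an infinite cardinal, then L(X^c_κ) ≤ 2^{wt(X)·κ}, where X^c_κ is the G^c_κ-modification of X. In particular this strengthens Pytkeev's theorem L(X_κ) ≤ 2^{t(X)·κ}. -/

import Mathlib

open Cardinal Set TopologicalSpace

universe u

/-- The tightness `t(X)`: the least infinite cardinal `κ` such that whenever
`x ∈ closure A` there is `B ⊆ A` with `#B ≤ κ` and `x ∈ closure B`. -/
noncomputable def tightness (X : Type u) [TopologicalSpace X] : Cardinal.{u} :=
  sInf {κ : Cardinal.{u} | ℵ₀ ≤ κ ∧ ∀ (A : Set X) (x : X), x ∈ closure A →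
    ∃ B ⊆ A, #B ≤ κ ∧ x ∈ closure B}

/-- The `κ`-closure of a set `A`. -/
noncomputable def clk {X : Type u} [TopologicalSpace X] (κ : Cardinal.{u}) (A : Set X) : Set X :=
  ⋃ (B : Set X) (_ : B ⊆ A ∧ #B ≤ κ), closure B

/-- A cover `𝒞` witnessing that `wt X ≤ κ`. -/
noncomputable def IsWtWitness {X : Type u} [TopologicalSpace X] (κ : Cardinal.{u}) (𝒞 : Set (Set X)) : Prop :=
  ⋃₀ 𝒞 = Set.univ ∧ #𝒞 ≤ 2 ^ κ ∧ ∀ C ∈ 𝒞, tightness ↥C ≤ κ ∧ clk (2 ^ κ) C = Set.univ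

/-- The weak tightness `wt(X)`. -/
noncomputable def wt (X : Type u) [TopologicalSpace X] : Cardinal.{u} :=
  sInf {κ : Cardinal.{u} | ℵ₀ ≤ κ ∧ ∃ 𝒞 : Set (Set X), IsWtWitness κ 𝒞}

/-- The Lindelöf number `L(X)`. -/
noncomputable def LindelofNumber (X : Type u) [TopologicalSpace X] : Cardinal.{u} :=
  sInf {κ : Cardinal.{u} | ℵ₀ ≤ κ ∧ ∀ 𝒰 : Set (Set X), (∀ U ∈ 𝒰, IsOpen U) →
    ⋃₀ 𝒰 = Set.univ → ∃ 𝒱 ⊆ 𝒰, #𝒱 ≤ κ ∧ ⋃₀ 𝒱 = Set.univ}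

/-- The pseudocharacter `ψ(X)`. -/
noncomputable def psi (X : Type u) [TopologicalSpace X] : Cardinal.{u} :=
  sInf {κ : Cardinal.{u} | ℵ₀ ≤ κ ∧ ∀ x : X, ∃ 𝒰 : Set (Set X),
    #𝒰 ≤ κ ∧ (∀ U ∈ 𝒰, IsOpen U ∧ x ∈ U) ∧ ⋂₀ 𝒰 = {x}}

/-- The closed pseudocharacter `ψ_c(X)`. -/
noncomputable def psic (X : Type u) [TopologicalSpace X] : Cardinal.{u} :=
  sInf {κ : Cardinal.{u} | ℵ₀ ≤ κ ∧ ∀ x : X, ∃ 𝒰 : Set (Set X),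
    #𝒰 ≤ κ ∧ (∀ U ∈ 𝒰, IsOpen U ∧ x ∈ U) ∧ (⋂ U ∈ 𝒰, closure U) = {x}}

/-- `A` is `𝒞`-saturated: `A ∩ C` is dense in `A` for every `C ∈ 𝒞`. -/
noncomputable def Saturated {X : Type u} [TopologicalSpace X] (𝒞 : Set (Set X)) (A : Set X) : Prop :=
  ∀ C ∈ 𝒞, A ⊆ closure (A ∩ C)

/-- The π-character `πχ(x, X)` of a point: least cardinality of a local π-base at `x`. -/
noncomputable def piCharPt {X : Type u} [TopologicalSpace X] (x : X) : Cardinal.{u} :=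
  sInf {κ : Cardinal.{u} | ∃ ℬ : Set (Set X), #ℬ ≤ κ ∧
    (∀ B ∈ ℬ, IsOpen B ∧ B.Nonempty) ∧ ∀ U : Set X, IsOpen U → x ∈ U → ∃ B ∈ ℬ, B ⊆ U}

/-- The π-character `πχ(X)`. -/
noncomputable def piChar (X : Type u) [TopologicalSpace X] : Cardinal.{u} :=
  ⨆ x : X, piCharPt x

/-- The character `χ(x, X)` of a point: least cardinality of a local base at `x`. -/
noncomputable def charPt {X : Type u} [TopologicalSpace X] (x : X) : Cardinal.{u} :=
  sInf {κ : Cardinal.{u} | ∃ ℬ : Set (Set X), #ℬ ≤ κ ∧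
    (∀ B ∈ ℬ, IsOpen B ∧ x ∈ B) ∧ ∀ U : Set X, IsOpen U → x ∈ U → ∃ B ∈ ℬ, B ⊆ U}

/-- The character `χ(X)`. -/
noncomputable def character (X : Type u) [TopologicalSpace X] : Cardinal.{u} :=
  ⨆ x : X, charPt x

/-- The density `d(X)`: least cardinality of a dense subset. -/
noncomputable def density (X : Type u) [TopologicalSpace X] : Cardinal.{u} :=
  sInf {κ : Cardinal.{u} | ∃ D : Set X, Dense D ∧ #D ≤ κ}

/-- A space is homogeneous if its homeomorphism group acts transitively. -/
noncomputable def Homogeneous (X : Type u) [TopologicalSpace X] : Prop :=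
  ∀ x y : X, ∃ h : X ≃ₜ X, h x = y

/-- A space is power homogeneous if some (nonempty) power of it is homogeneous. -/
noncomputable def PowerHomogeneous (X : Type u) [TopologicalSpace X] : Prop :=
  ∃ I : Type u, Nonempty I ∧ Homogeneous (I → X)

/-- A `G^c_κ`-set: `G = ⋂𝒰 = ⋂_{U ∈ 𝒰} closure U` for a family `𝒰` of `≤ κ` open sets. -/
noncomputable def GcSet {X : Type u} [TopologicalSpace X] (κ : Cardinal.{u}) (G : Set X) : Prop :=
  ∃ 𝒰 : Set (Set X), #𝒰 ≤ κ ∧ (∀ U ∈ 𝒰, IsOpen U) ∧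
    G = ⋂₀ 𝒰 ∧ G = ⋂ U ∈ 𝒰, closure U

/-- A subset is subseparable if it is contained in the closure of a countable set. -/
noncomputable def Subseparable {X : Type u} [TopologicalSpace X] (A : Set X) : Prop :=
  ∃ c : Set X, c.Countable ∧ A ⊆ closure c

noncomputable def auxStages {X : Type u} (F : Set X → Set X) (o : Ordinal.{u}) : o.ToType → Set X :=
  fun i => F (⋃ j : {j : o.ToType // j < i}, auxStages F o j)
termination_by i => i
decreasing_by exact j.2

theorem auxStages_def {X : Type u} (F : Set X → Set X) (o : Ordinal.{u}) (i : o.ToType) :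
    auxStages F o i = F (⋃ j : {j : o.ToType // j < i}, auxStages F o j) := by
  rw [auxStages]

theorem mk_iUnion_le' {ι β : Type u} (f : ι → Set β) {c1 c2 : Cardinal.{u}}
    (h1 : #ι ≤ c1) (h2 : ∀ i, #(f i) ≤ c2) : #(⋃ i, f i) ≤ c1 * c2 := by
  rcases isEmpty_or_nonempty ι with h | h
  · simp [iUnion_of_empty]
  · exact (mk_iUnion_le f).trans (mul_le_mul' h1 (ciSup_le' h2))

theorem mk_biUnion_le' {α β : Type u} {s : Set α} (f : α → Set β) {c1 c2 : Cardinal.{u}}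
    (h1 : #s ≤ c1) (h2 : ∀ a ∈ s, #(f a) ≤ c2) : #(⋃ a ∈ s, f a) ≤ c1 * c2 := by
  rw [biUnion_eq_iUnion]
  exact mk_iUnion_le' _ h1 fun i => h2 i i.2

section aux
variable {X : Type u}

theorem tightness_spec (Y : Type u) [TopologicalSpace Y] :
    ∀ (A : Set Y) (x : Y), x ∈ closure A → ∃ B ⊆ A, #B ≤ tightness Y ∧ x ∈ closure B := by
  have hne : (max ℵ₀ #Y) ∈ {κ : Cardinal.{u} | ℵ₀ ≤ κ ∧ ∀ (A : Set Y) (x : Y), x ∈ closure A →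
      ∃ B ⊆ A, #B ≤ κ ∧ x ∈ closure B} :=
    ⟨le_max_left _ _, fun A x hx => ⟨A, Subset.rfl, (mk_set_le A).trans (le_max_right _ _), hx⟩⟩
  exact (csInf_mem (Set.nonempty_of_mem hne)).2

theorem wt_spec (X : Type u) [TopologicalSpace X] :
    ℵ₀ ≤ wt X ∧ ∃ 𝒞 : Set (Set X), IsWtWitness (wt X) 𝒞 := by
  have hne : (max ℵ₀ #X) ∈ {κ : Cardinal.{u} | ℵ₀ ≤ κ ∧ ∃ 𝒞 : Set (Set X), IsWtWitness κ 𝒞} := by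
    refine ⟨le_max_left _ _, {Set.univ}, ?_, ?_, ?_⟩
    · simp
    · simp only [mk_singleton]
      calc (1 : Cardinal.{u}) ≤ 2 := one_le_two
        _ = 2 ^ (1 : Cardinal.{u}) := (power_one 2).symm
        _ ≤ 2 ^ max ℵ₀ #X :=
          power_le_power_left two_ne_zero ((one_lt_aleph0.le).trans (le_max_left _ _))
    · rintro C rfl
      constructor
      · refine csInf_le' ⟨le_max_left _ _, fun A x hx => ⟨A, Subset.rfl, ?_, hx⟩⟩
        exact (mk_set_le A).trans ((mk_univ.le).trans (le_max_right _ _))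
      · refine eq_univ_iff_forall.2 fun x => ?_
        refine mem_iUnion.2 ⟨{x}, mem_iUnion.2 ⟨⟨subset_univ _, ?_⟩, subset_closure rfl⟩⟩
        rw [mk_singleton]
        exact one_le_two.trans (le_trans (by rw [power_one]) (power_le_power_left two_ne_zero
          ((one_lt_aleph0.le).trans (le_max_left _ _))))
  exact (csInf_mem (Set.nonempty_of_mem hne))

variable [TopologicalSpace X]

theorem gcSet_univ {κ : Cardinal.{u}} : GcSet κ (Set.univ : Set X) :=
  ⟨∅, by simp, by simp, by simp, by simp⟩

theorem gcSet_inter {κ : Cardinal.{u}} (hκ : ℵ₀ ≤ κ) {G₁ G₂ : Set X}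
    (h1 : GcSet κ G₁) (h2 : GcSet κ G₂) : GcSet κ (G₁ ∩ G₂) := by
  obtain ⟨𝒰₁, hc1, ho1, he1, hf1⟩ := h1
  obtain ⟨𝒰₂, hc2, ho2, he2, hf2⟩ := h2
  refine ⟨𝒰₁ ∪ 𝒰₂, ?_, ?_, ?_, ?_⟩
  · exact (mk_union_le _ _).trans (add_le_of_le hκ hc1 hc2)
  · rintro U (h | h); exacts [ho1 U h, ho2 U h]
  · rw [sInter_union, he1, he2]
  · rw [biInter_union, ← hf1, ← hf2]

theorem gc_refine {κ : Cardinal.{u}} (hκ : ℵ₀ ≤ κ) {V : Set X}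
    (hV : @IsOpen X (generateFrom {G : Set X | GcSet κ G}) V) :
    ∀ x ∈ V, ∃ G, GcSet κ G ∧ x ∈ G ∧ G ⊆ V := by
  have hV' : GenerateOpen {G : Set X | GcSet κ G} V := hV
  clear hV
  induction hV' with
  | basic U hU => exact fun x hx => ⟨U, hU, hx, Subset.rfl⟩
  | univ => exact fun x hx => ⟨Set.univ, gcSet_univ, trivial, Subset.rfl⟩
  | inter U W hU hW ihU ihW =>
    intro x hx
    obtain ⟨G₁, hG1, hx1, hs1⟩ := ihU x hx.1
    obtain ⟨G₂, hG2, hx2, hs2⟩ := ihW x hx.2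
    exact ⟨G₁ ∩ G₂, gcSet_inter hκ hG1 hG2, ⟨hx1, hx2⟩, inter_subset_inter hs1 hs2⟩
  | sUnion 𝔖 h ih =>
    rintro x ⟨W, hW, hxW⟩
    obtain ⟨G, hG, hxG, hGW⟩ := ih W hW x hxW
    exact ⟨G, hG, hxG, hGW.trans (subset_sUnion_of_mem hW)⟩

def trmap (B : Set X) (𝒰 : Set (Set X)) : Set (Set ↥B) :=
  (fun U => (Subtype.val ⁻¹' U : Set ↥B)) '' 𝒰

theorem heart {B : Set X} {𝒰w 𝒰z : Set (Set X)} {w : X}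
    (hop : ∀ V ∈ 𝒰w, IsOpen V)
    (hw : w ∈ closure B) (hww : w ∈ ⋂₀ 𝒰w) (htr : trmap B 𝒰z = trmap B 𝒰w) :
    w ∈ ⋂ U ∈ 𝒰z, closure U := by
  rw [mem_iInter₂]
  intro U hU
  have hmem : (Subtype.val ⁻¹' U : Set ↥B) ∈ trmap B 𝒰w := htr ▸ ⟨U, hU, rfl⟩
  obtain ⟨V, hV, hVU⟩ := hmem
  have hVB : B ∩ V = B ∩ U := by
    have := congrArg (fun (s : Set ↥B) => (Subtype.val '' s)) hVU
    simpa [Subtype.image_preimage_coe] using this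
  have hwcl : w ∈ closure (B ∩ U) := by
    rw [mem_closure_iff] at hw ⊢
    intro O hO hwO
    obtain ⟨b, hbO, hbB⟩ := hw (O ∩ V) (hO.inter (hop V hV)) ⟨hwO, hww V hV⟩
    exact ⟨b, hbO.1, (hVB ▸ ⟨hbB, hbO.2⟩ : b ∈ B ∩ U)⟩
  exact closure_mono inter_subset_right hwcl

end aux

/-- Corollary 3.5: for compact `X`, `L(X^c_κ) ≤ 2^{wt(X)·κ}`. -/
theorem stmt11 {X : Type u} [TopologicalSpace X] [CompactSpace X]
    (κ : Cardinal.{u}) (hκ : ℵ₀ ≤ κ) :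
    @LindelofNumber X (generateFrom {G : Set X | GcSet κ G}) ≤ 2 ^ (wt X * κ) := by
  classical
  obtain ⟨hl, 𝒞, h𝒞cov, h𝒞card, h𝒞mem⟩ := wt_spec X
  set l : Cardinal.{u} := wt X with hldef
  set μ : Cardinal.{u} := 2 ^ (l * κ) with hμdef
  -- cardinal arithmetic facts
  have hκ0 : κ ≠ 0 := (aleph0_pos.trans_le hκ).ne'
  have hl0 : l ≠ 0 := (aleph0_pos.trans_le hl).ne'
  have h2l : (2 : Cardinal.{u}) ^ l ≤ μ := power_le_power_left two_ne_zero (le_mul_right hκ0)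
  have h2κ : (2 : Cardinal.{u}) ^ κ ≤ μ := power_le_power_left two_ne_zero (le_mul_left hl0)
  have hlμ : l ≤ μ := (cantor l).le.trans h2l
  have hκμ : κ ≤ μ := (cantor κ).le.trans h2κ
  have hμinf : ℵ₀ ≤ μ := hκ.trans hκμ
  have hmul : ∀ a b : Cardinal.{u}, a ≤ μ → b ≤ μ → a * b ≤ μ := fun a b ha hb =>
    (mul_le_mul' ha hb).trans (mul_eq_self hμinf).le
  have hadd : ∀ a b : Cardinal.{u}, a ≤ μ → b ≤ μ → a + b ≤ μ := fun a b ha hb =>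
    add_le_of_le hμinf ha hb
  have hsucc : Order.succ l ≤ μ := (Order.succ_le_of_lt (cantor l)).trans h2l
  have hμpowl : μ ^ l = μ := by
    rw [hμdef, ← power_mul, mul_right_comm, mul_eq_self hl]
  have hμpowκ : μ ^ κ = μ := by
    rw [hμdef, ← power_mul, mul_assoc, mul_eq_self (hκ : ℵ₀ ≤ κ)]
  -- membership in the Lindelöf-number defining set
  rw [LindelofNumber]
  refine csInf_le' ⟨hμinf, fun 𝒱 h𝒱op h𝒱cov => ?_⟩
  -- assignment of Gc-sets
  have hassign : ∀ x : X, ∃ (V : Set X) (𝒰 : Set (Set X)), V ∈ 𝒱 ∧ #𝒰 ≤ κ ∧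
      (∀ U ∈ 𝒰, IsOpen U) ∧ x ∈ ⋂₀ 𝒰 ∧ ⋂₀ 𝒰 = (⋂ U ∈ 𝒰, closure U) ∧
      (⋂ U ∈ 𝒰, closure U) ⊆ V := by
    intro x
    have hx : x ∈ ⋃₀ 𝒱 := h𝒱cov ▸ mem_univ x
    obtain ⟨V, hV𝒱, hxV⟩ := hx
    obtain ⟨G, hG, hxG, hGV⟩ := gc_refine hκ (h𝒱op V hV𝒱) x hxV
    obtain ⟨𝒰, hc, ho, he, hf⟩ := hG
    refine ⟨V, 𝒰, hV𝒱, hc, ho, he ▸ hxG, by rw [← he, ← hf], ?_⟩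
    rw [← hf]; exact hGV
  choose Vx 𝒰x hV𝒱 h𝒰card h𝒰op hxmem h𝒰eq h𝒰sub using hassign
  set G : X → Set X := fun x => ⋂ U ∈ 𝒰x x, closure U with hGdef
  -- enumeration of each 𝒰x by κ
  set K : Type u := Quotient.out κ with hKdef
  have hKcard : #K = κ := mk_out κ
  have henum : ∀ x : X, ∃ e : K → Set X, ∀ U ∈ 𝒰x x, ∃ k, e k = U := by
    intro x
    rcases eq_empty_or_nonempty (𝒰x x) with h | h
    · exact ⟨fun _ => ∅, by simp [h]⟩
    · haveI : Nonempty ↥(𝒰x x) := h.to_subtype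
      have hle : #↥(𝒰x x) ≤ #K := by rw [hKcard]; exact h𝒰card x
      obtain ⟨f⟩ := hle
      refine ⟨fun k => ((Function.invFun f k : ↥(𝒰x x)) : Set X), fun U hU => ?_⟩
      exact ⟨f ⟨U, hU⟩, congrArg Subtype.val (Function.leftInverse_invFun f.injective ⟨U, hU⟩)⟩
  choose en hen using henum
  -- saturation witnesses
  have hsatw : ∀ (a : X) (C : Set X), ∃ B : Set X,
      C ∈ 𝒞 → B ⊆ C ∧ #B ≤ 2 ^ l ∧ a ∈ closure B := by
    intro a C
    by_cases hC : C ∈ 𝒞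
    · have hcl := (h𝒞mem C hC).2
      have ha : a ∈ clk (2 ^ l) C := hcl ▸ mem_univ a
      simp only [clk, mem_iUnion] at ha
      obtain ⟨B, ⟨hBC, hBcard⟩, haB⟩ := ha
      exact ⟨B, fun _ => ⟨hBC, hBcard, haB⟩⟩
    · exact ⟨∅, fun h => absurd h hC⟩
  choose satB hsatB using hsatw
  -- tightness transfer
  have htight : ∀ C ∈ 𝒞, ∀ (S : Set X) (w : X), w ∈ C → w ∈ closure (S ∩ C) →
      ∃ B : Set X, B ⊆ S ∧ #B ≤ l ∧ w ∈ closure B := by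
    intro C hC S w hwC hwcl
    have h1 : tightness ↥C ≤ l := (h𝒞mem C hC).1
    have hwA : (⟨w, hwC⟩ : ↥C) ∈ closure (Subtype.val ⁻¹' S : Set ↥C) := by
      rw [closure_subtype]
      have himg : (Subtype.val '' (Subtype.val ⁻¹' S : Set ↥C)) = S ∩ C := by
        rw [Subtype.image_preimage_coe, inter_comm]
      rw [himg]
      exact hwcl
    obtain ⟨B', hB'A, hB'card, hwB'⟩ := tightness_spec ↥C _ ⟨w, hwC⟩ hwA
    refine ⟨Subtype.val '' B', ?_, ?_, ?_⟩
    · rintro x ⟨b, hb, rfl⟩; exact hB'A hb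
    · exact mk_image_le.trans (hB'card.trans h1)
    · rw [closure_subtype] at hwB'; exact hwB'
  -- choice-based "pick" sets
  set pickT : (B : Set X) → Set (Set ↥B) → Set X := fun B v =>
    {x | ∃ h : ∃ z, z ∈ closure B ∧ trmap B (𝒰x z) = v, x = h.choose} with hpickTdef
  have hpickspec : ∀ (B : Set X) (v : Set (Set ↥B)), ∀ x ∈ pickT B v,
      x ∈ closure B ∧ trmap B (𝒰x x) = v := by
    rintro B v x ⟨h, rfl⟩; exact h.choose_spec
  have hpickmem : ∀ (B : Set X) (w : X), w ∈ closure B →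
      (pickT B (trmap B (𝒰x w))).Nonempty := by
    intro B w hw
    have h : ∃ z, z ∈ closure B ∧ trmap B (𝒰x z) = trmap B (𝒰x w) := ⟨w, hw, rfl⟩
    exact ⟨h.choose, h, rfl⟩
  have hpickcard : ∀ (B : Set X) (v : Set (Set ↥B)), #(pickT B v) ≤ 1 := by
    intro B v
    by_cases h : ∃ z, z ∈ closure B ∧ trmap B (𝒰x z) = v
    · have hsub : pickT B v ⊆ {h.choose} := by rintro x ⟨h', rfl⟩; exact rfl
      exact (mk_le_mk_of_subset hsub).trans (by rw [mk_singleton])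
    · have : pickT B v = ∅ := by
        refine eq_empty_iff_forall_notMem.2 ?_
        rintro x ⟨h', _⟩; exact h h'
      simp [this]
  -- escape sets
  set esc : Set (Set X) → Set X := fun F =>
    {x | ∃ h : ∃ y : X, y ∉ ⋃ U ∈ F, closure U, x = h.choose} with hescdef
  have hescspec : ∀ (F : Set (Set X)), ∀ x ∈ esc F, x ∉ ⋃ U ∈ F, closure U := by
    rintro F x ⟨h, rfl⟩; exact h.choose_spec
  have hescne : ∀ F : Set (Set X), (∃ y : X, y ∉ ⋃ U ∈ F, closure U) → (esc F).Nonempty :=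
    fun F h => ⟨h.choose, h, rfl⟩
  have hesccard : ∀ F : Set (Set X), #(esc F) ≤ 1 := by
    intro F
    by_cases h : ∃ y : X, y ∉ ⋃ U ∈ F, closure U
    · have hsub : esc F ⊆ {h.choose} := by rintro x ⟨h', rfl⟩; exact rfl
      exact (mk_le_mk_of_subset hsub).trans (by rw [mk_singleton])
    · have : esc F = ∅ := by
        refine eq_empty_iff_forall_notMem.2 ?_
        rintro x ⟨h', _⟩; exact h h'
      simp [this]
  -- the closing-off operator
  set Φ : Set X → Set X := fun A => ⋃ a ∈ A, ⋃ C ∈ 𝒞, satB a C with hΦdef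
  set Ψ : Set X → Set X := fun A =>
    ⋃ B ∈ {B : Set X | B ⊆ A ∧ #B ≤ l}, ⋃ v ∈ {v : Set (Set ↥B) | #v ≤ κ}, pickT B v with hΨdef
  set Θ : Set X → Set X := fun A =>
    ⋃ (n : ULift.{u} ℕ), ⋃ (t : Fin n.down → ↥A × K),
      esc (Set.range fun j => en ((t j).1 : X) (t j).2)
    with hΘdef
  set F : Set X → Set X := fun A => A ∪ (Φ A ∪ Ψ A ∪ Θ A) with hFdef
  have hFincl : ∀ A : Set X, A ⊆ F A := fun A => subset_union_left
  -- cardinality of the operator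
  have hΦcard : ∀ A : Set X, #A ≤ μ → #(Φ A) ≤ μ := by
    intro A hA
    have : #(Φ A) ≤ μ * (μ * μ) := by
      refine mk_biUnion_le' _ hA fun a _ => ?_
      refine mk_biUnion_le' _ (h𝒞card.trans h2l |>.trans ?_) fun C hC => ?_
      · exact le_rfl
      · exact ((hsatB a C hC).2.1).trans h2l |>.trans le_rfl
    calc #(Φ A) ≤ μ * (μ * μ) := this
      _ ≤ μ := hmul _ _ le_rfl (hmul _ _ le_rfl le_rfl)
  have hΨcard : ∀ A : Set X, #A ≤ μ → #(Ψ A) ≤ μ := by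
    intro A hA
    have hc1 : #{B : Set X | B ⊆ A ∧ #B ≤ l} ≤ μ := by
      have := mk_bounded_subset_le A l
      refine le_trans this ?_
      have hmax : max #↥A ℵ₀ ≤ μ := max_le (hA.trans le_rfl) hμinf
      calc (max #↥A ℵ₀) ^ l ≤ μ ^ l := power_le_power_right hmax
        _ = μ := hμpowl
    refine le_trans (mk_biUnion_le' _ hc1 fun B hB => ?_) (hmul _ _ le_rfl le_rfl)
    have hc2 : #{v : Set (Set ↥B) | #v ≤ κ} ≤ μ := by
      have := mk_bounded_set_le (Set ↥B) κ
      refine le_trans this ?_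
      have h1 : #(Set ↥B) = 2 ^ #↥B := mk_set
      have h2 : (2 : Cardinal.{u}) ^ #↥B ≤ 2 ^ l := power_le_power_left two_ne_zero hB.2
      have hmax : max #(Set ↥B) ℵ₀ ≤ μ := by
        refine max_le ?_ hμinf
        rw [h1]; exact h2.trans h2l
      calc (max #(Set ↥B) ℵ₀) ^ κ ≤ μ ^ κ := power_le_power_right hmax
        _ = μ := hμpowκ
    refine le_trans (mk_biUnion_le' _ hc2 fun v _ => ?_) (hmul _ _ le_rfl le_rfl)
    exact (hpickcard B v).trans (one_le_aleph0.trans hμinf)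
  have hΘcard : ∀ A : Set X, #A ≤ μ → #(Θ A) ≤ μ := by
    intro A hA
    show #(⋃ (n : ULift.{u} ℕ), ⋃ (t : Fin n.down → ↥A × K),
      esc (Set.range fun j => en ((t j).1 : X) (t j).2)) ≤ μ
    refine le_trans (mk_iUnion_le' _ (le_trans (mk_le_aleph0) hμinf) fun n => ?_)
      (hmul _ _ le_rfl le_rfl)
    refine le_trans (mk_iUnion_le' _ ?_ fun t => (hesccard _).trans (one_le_aleph0.trans hμinf))
      (hmul _ _ le_rfl le_rfl)
    have h1 : #(Fin n.down → ↥A × K) = (#(↥A × K)) ^ (n.down : Cardinal.{u}) := by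
      rw [mk_arrow]
      simp
    rw [h1]
    have h2 : #(↥A × K) ≤ μ := by
      rw [mk_prod]
      simp only [lift_id]
      exact hmul _ _ hA (hKcard.le.trans hκμ)
    calc (#(↥A × K)) ^ (n.down : Cardinal.{u}) ≤ μ ^ (n.down : Cardinal.{u}) :=
          power_le_power_right h2
      _ ≤ μ := power_nat_le hμinf
  have hFcard : ∀ A : Set X, #A ≤ μ → #(F A) ≤ μ := by
    intro A hA
    refine le_trans (mk_union_le _ _) (hadd _ _ hA ?_)
    refine le_trans (mk_union_le _ _) (hadd _ _ ?_ (hΘcard A hA))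
    exact le_trans (mk_union_le _ _) (hadd _ _ (hΦcard A hA) (hΨcard A hA))
  -- the transfinite chain
  set o : Ordinal.{u} := (Order.succ l).ord with hodef
  have hslinf : ℵ₀ ≤ Order.succ l := hl.trans (Order.le_succ l)
  haveI hnomax : NoMaxOrder o.ToType := Cardinal.noMaxOrder hslinf
  have hιcard : #o.ToType = Order.succ l := by rw [hodef, mk_toType, card_ord]
  haveI : IsWellOrder o.ToType (· < ·) := ⟨⟩
  have hbdd : ∀ s : Set o.ToType, #s ≤ l → ∃ i : o.ToType, ∀ j ∈ s, j < i := by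
    intro s hs
    have hocof : o.cof = Order.succ l := by
      rw [hodef]; exact (isRegular_succ hl).cof_eq
    by_contra hne
    push_neg at hne
    have hcf : IsCofinal s := fun a => by
      obtain ⟨a', ha'⟩ := exists_gt a
      obtain ⟨j, hj, hja⟩ := hne a'
      exact ⟨j, hj, ha'.le.trans hja⟩
    have hcle := Order.cof_le hcf
    rw [Ordinal.cof_toType, hocof] at hcle
    exact absurd (hcle.trans hs) (not_le.2 (Order.lt_succ_of_not_isMax (not_isMax l)))
  set g : o.ToType → Set X := auxStages F o with hgdef
  set Ag : o.ToType → Set X := fun i => ⋃ j : {j : o.ToType // j < i}, g j with hAgdef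
  have hgeq : ∀ i, g i = F (Ag i) := fun i => auxStages_def F o i
  have hAgsubg : ∀ i, Ag i ⊆ g i := fun i => (hgeq i) ▸ hFincl (Ag i)
  have hgcard : ∀ i, #(g i) ≤ μ := by
    intro i
    induction i using WellFoundedLT.induction with
    | _ i ih =>
      have hA : #(Ag i) ≤ μ := by
        refine le_trans (mk_iUnion_le' (fun j : {j : o.ToType // j < i} => g j.1)
          ((mk_subtype_le _).trans (hιcard.le.trans hsucc)) fun j => ih j.1 j.2)
          (hmul _ _ le_rfl le_rfl)
      have hcongr : #(g i) = #(F (Ag i)) := congrArg (fun s : Set X => #(↥s)) (hgeq i)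
      rw [hcongr]
      exact hFcard _ hA
  set S : Set X := ⋃ i, g i with hSdef
  have hScard : #S ≤ μ :=
    le_trans (mk_iUnion_le' _ (hιcard.le.trans hsucc) hgcard) (hmul _ _ le_rfl le_rfl)
  have hgS : ∀ i, g i ⊆ S := fun i => subset_iUnion g i
  have hsmall : ∀ s : Set X, s ⊆ S → #s ≤ l → ∃ i, s ⊆ Ag i := by
    intro s hsub hcard
    have hrk : ∀ x : ↥s, ∃ i, (x : X) ∈ g i := fun x => mem_iUnion.1 (hsub x.2)
    choose rk hrk using hrk
    obtain ⟨i, hi⟩ := hbdd (Set.range rk) (mk_range_le.trans hcard)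
    refine ⟨i, fun x hx => ?_⟩
    exact mem_iUnion.2 ⟨⟨rk ⟨x, hx⟩, hi _ ⟨⟨x, hx⟩, rfl⟩⟩, hrk ⟨x, hx⟩⟩
  -- saturation of S
  have hsat : ∀ C ∈ 𝒞, S ⊆ closure (S ∩ C) := by
    intro C hC a ha
    obtain ⟨i, hi⟩ := mem_iUnion.1 ha
    obtain ⟨i', hii'⟩ := exists_gt i
    have haA : a ∈ Ag i' := mem_iUnion.2 ⟨⟨i, hii'⟩, hi⟩
    have hsub : satB a C ⊆ S ∩ C := by
      intro b hb
      constructor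
      · refine hgS i' ?_
        rw [hgeq i']
        refine Set.mem_union_right _ (Set.mem_union_left _ (Set.mem_union_left _ ?_))
        exact mem_biUnion haA (mem_biUnion hC hb)
      · exact (hsatB a C hC).1 hb
    exact closure_mono hsub ((hsatB a C hC).2.2)
  -- covering property of closure S
  have hcov : ∀ w ∈ closure S, ∃ z ∈ S, w ∈ G z := by
    intro w hw
    obtain ⟨C, hC, hwC⟩ : w ∈ ⋃₀ 𝒞 := h𝒞cov ▸ mem_univ w
    have hw2 : w ∈ closure (S ∩ C) := by
      have h' := closure_mono (hsat C hC)
      rw [closure_closure] at h'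
      exact h' hw
    obtain ⟨B, hBS, hBl, hwB⟩ := htight C hC S w hwC hw2
    obtain ⟨i, hBA⟩ := hsmall B hBS hBl
    obtain ⟨z, hz⟩ := hpickmem B w hwB
    have hzspec := hpickspec B _ z hz
    have hzS : z ∈ S := by
      refine hgS i ?_
      rw [hgeq i]
      refine Set.mem_union_right _ (Set.mem_union_left _ (Set.mem_union_right _ ?_))
      refine mem_biUnion (show B ∈ {B : Set X | B ⊆ Ag i ∧ #B ≤ l} from ⟨hBA, hBl⟩) ?_
      refine mem_biUnion (show trmap B (𝒰x w) ∈ {v : Set (Set ↥B) | #v ≤ κ} from ?_) hz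
      exact mk_image_le.trans (h𝒰card w)
    refine ⟨z, hzS, ?_⟩
    exact heart (h𝒰op w) hwB (hxmem w) hzspec.2
  -- S-indexed Gc-sets cover X
  have hXcov : ∀ y : X, ∃ z ∈ S, y ∈ G z := by
    by_contra hne
    push_neg at hne
    obtain ⟨xs, hxs⟩ := hne
    have hu : ∀ z : ↥S, ∃ U, U ∈ 𝒰x (z : X) ∧ xs ∉ closure U := by
      intro z
      have h' := hxs (z : X) z.2
      by_contra h
      push_neg at h
      exact h' (mem_iInter₂.2 fun U hU => h U hU)
    choose u hu𝒰 hucl using hu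
    have hcompact : IsCompact (closure S) := isClosed_closure.isCompact
    have hcover : closure S ⊆ ⋃ z : ↥S, u z := by
      intro w hw
      obtain ⟨z, hzS, hwG⟩ := hcov w hw
      have hw0 : w ∈ ⋂₀ 𝒰x z := by rw [h𝒰eq z]; exact hwG
      exact mem_iUnion.2 ⟨⟨z, hzS⟩, hw0 _ (hu𝒰 ⟨z, hzS⟩)⟩
    obtain ⟨T₀, hT₀⟩ := hcompact.elim_finite_subcover (fun z : ↥S => u z)
      (fun z => h𝒰op (z : X) _ (hu𝒰 z)) hcover
    -- find a stage containing the (finitely many) points of T₀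
    have hfin : #((fun z : ↥S => (z : X)) '' ↑T₀) ≤ l :=
      (((T₀ : Set ↥S).toFinite.image _).lt_aleph0.le).trans hl
    obtain ⟨i, hi⟩ := hsmall _ (by rintro x ⟨z, _, rfl⟩; exact z.2) hfin
    -- build the tuple realizing the finite family of chosen open sets
    set n := T₀.card with hndef
    set eqv := T₀.equivFin with heqvdef
    have hAgmem : ∀ j : Fin n, (((eqv.symm j : ↥T₀) : ↥S) : X) ∈ Ag i := by
      intro j
      exact hi ⟨((eqv.symm j : ↥T₀) : ↥S), (eqv.symm j).2, rfl⟩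
    have hk : ∀ j : Fin n, ∃ k : K,
        en (((eqv.symm j : ↥T₀) : ↥S) : X) k = u ((eqv.symm j : ↥T₀) : ↥S) :=
      fun j => hen _ _ (hu𝒰 _)
    choose kk hkk using hk
    set t : Fin n → ↥(Ag i) × K := fun j => (⟨_, hAgmem j⟩, kk j) with htdef
    set Fam : Set (Set X) := Set.range fun j : Fin n => en ((t j).1 : X) (t j).2 with hFamdef
    have hFam1 : ∀ U ∈ Fam, ∃ z : ↥S, z ∈ T₀ ∧ U = u z := by
      rintro U ⟨j, rfl⟩
      refine ⟨((eqv.symm j : ↥T₀) : ↥S), (eqv.symm j).2, ?_⟩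
      show en (((eqv.symm j : ↥T₀) : ↥S) : X) (kk j) = u ((eqv.symm j : ↥T₀) : ↥S)
      exact (hkk j).symm ▸ rfl
    have hFam2 : ∀ z : ↥S, z ∈ T₀ → u z ∈ Fam := by
      intro z hz
      refine ⟨eqv ⟨z, hz⟩, ?_⟩
      show en (((eqv.symm (eqv ⟨z, hz⟩) : ↥T₀) : ↥S) : X) (kk (eqv ⟨z, hz⟩)) = u z
      rw [hkk (eqv ⟨z, hz⟩), Equiv.symm_apply_apply]
    have hescS : esc Fam ⊆ S := by
      intro x hx
      refine hgS i ?_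
      rw [hgeq i]
      refine Set.mem_union_right _ (Set.mem_union_right _ ?_)
      exact mem_iUnion.2 ⟨ULift.up n, mem_iUnion.2 ⟨t, hx⟩⟩
    by_cases hfull : ∃ y : X, y ∉ ⋃ U ∈ Fam, closure U
    · obtain ⟨q, hq⟩ := hescne Fam hfull
      have hqS : q ∈ S := hescS hq
      have hqcl : q ∉ ⋃ U ∈ Fam, closure U := hescspec Fam q hq
      have hqmem : q ∈ ⋃ z ∈ T₀, u z := hT₀ (subset_closure hqS)
      obtain ⟨z, hz, hqu⟩ := mem_iUnion₂.1 hqmem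
      exact hqcl (mem_iUnion₂.2 ⟨u z, hFam2 z hz, subset_closure hqu⟩)
    · push_neg at hfull
      obtain ⟨U, hUF, hxU⟩ := mem_iUnion₂.1 (hfull xs)
      obtain ⟨z, hzT, rfl⟩ := hFam1 U hUF
      exact hucl z hxU
  -- conclude
  refine ⟨(fun z : X => Vx z) '' S, ?_, ?_, ?_⟩
  · rintro V ⟨z, hz, rfl⟩; exact hV𝒱 z
  · exact mk_image_le.trans hScard
  · refine eq_univ_iff_forall.2 fun y => ?_
    obtain ⟨z, hzS, hyG⟩ := hXcov y
    exact ⟨Vx z, ⟨z, hzS, rfl⟩, h𝒰sub z hyG⟩
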